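/- Let p be a prime and let m be an integer with m > 1. Then there exists a strictly optimal (p(p^m−1), p^{m−1}, p; p^m)-FHS set; that is, there exists a set S of p^{m−1} FHSs of length n = p(p^m−1) over an alphabet of size l = p^m such that H(S;L) ≤ ⌈Lp/n⌉ for every L with 1 ≤ L ≤ n, where p = ⌈(2InM−(I+1)Il)/((nM−1)M)⌉ with M = p^{m−1} and I = ⌊nM/l⌋. -/

import Mathlib

open Finset

/-- Partial Hamming correlation `H_{X,Y}(τ; j | L)` of the frequency hopping
sequences `X, Y : ZMod n → F` for shift `τ`, window start `j` and window length `L`. -/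
def partialHC {n : ℕ} {F : Type*} [DecidableEq F] (X Y : ZMod n → F)
    (τ j : ZMod n) (L : ℕ) : ℕ :=
  ∑ t ∈ Finset.range L, if X (j + (t : ZMod n)) = Y (j + (t : ZMod n) + τ) then 1 else 0

/-- The Peng–Fan bound value `⌈(2InM − (I+1)Il) / ((nM−1)M)⌉` where `I = ⌊nM/l⌋`. -/
def pengFanBound (n M l : ℕ) : ℤ :=
  ⌈(((2 * (n * M / l) * n * M : ℕ) : ℚ) - (((n * M / l + 1) * (n * M / l) * l : ℕ) : ℚ))
    / ((((n * M : ℕ) : ℚ) - 1) * (M : ℚ))⌉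

/-- There is a strictly optimal `(n, M, λ; l)`-FHS set (with respect to the Peng–Fan
bound): `λ` equals the Peng–Fan bound value and there are `M` pairwise distinct FHSs of
length `n` over an alphabet of size `l` whose maximum nontrivial partial Hamming
correlation satisfies `H(S; L) ≤ ⌈Lλ/n⌉` for every window length `1 ≤ L ≤ n`. -/
def IsStrictlyOptimalFHSSet (n M lam l : ℕ) : Prop :=
  (lam : ℤ) = pengFanBound n M l ∧
  ∃ X : Fin M → (ZMod n → Fin l),
    (∀ a b : Fin M, a ≠ b → X a ≠ X b) ∧
    ∀ L : ℕ, 1 ≤ L → L ≤ n →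
      (∀ a : Fin M, ∀ τ : ZMod n, τ ≠ 0 → ∀ j : ZMod n,
        (partialHC (X a) (X a) τ j L : ℤ) ≤ ⌈((L * lam : ℕ) : ℚ) / (n : ℚ)⌉) ∧
      (∀ a b : Fin M, a ≠ b → ∀ τ j : ZMod n,
        (partialHC (X a) (X b) τ j L : ℤ) ≤ ⌈((L * lam : ℕ) : ℚ) / (n : ℚ)⌉)

lemma count_aux (L Q r : ℕ) (P : ℕ → Prop) [DecidablePred P]
    (h : ∀ t ∈ Finset.range L, P t → t % Q = r) :
    (∑ t ∈ Finset.range L, if P t then 1 else 0) ≤ (L - 1) / Q + 1 := by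
  calc (∑ t ∈ Finset.range L, if P t then 1 else 0)
      ≤ ∑ t ∈ Finset.range L, if t % Q = r then 1 else 0 := by
        apply Finset.sum_le_sum
        intro t ht
        by_cases hP : P t
        · simp [hP, h t ht hP]
        · simp [hP]
    _ = ((Finset.range L).filter (fun t => t % Q = r)).card := by
        rw [Finset.card_filter]
    _ ≤ (Finset.range ((L - 1) / Q + 1)).card := by
        apply Finset.card_le_card_of_injOn (fun t => t / Q)
        · intro t ht
          simp only [Finset.mem_coe, Finset.mem_filter, Finset.mem_range] at ht ⊢
          have h1 : t ≤ L - 1 := by omega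
          have h2 := Nat.div_le_div_right (c := Q) h1
          exact Nat.lt_succ_of_le h2
        · intro t ht t' ht' hd
          simp only [Finset.coe_filter, Set.mem_setOf_eq, Finset.mem_range] at ht ht'
          have hd' : t / Q = t' / Q := hd
          have e1 := Nat.div_add_mod t Q
          have e2 := Nat.div_add_mod t' Q
          rw [hd', ht.2] at e1
          rw [ht'.2] at e2
          omega
    _ = (L - 1) / Q + 1 := Finset.card_range _

lemma ceil_aux (L Q p : ℕ) (hQ : 0 < Q) (hp : 0 < p) (hL : 1 ≤ L) :
    (((L - 1) / Q + 1 : ℕ) : ℤ) ≤ ⌈((L * p : ℕ) : ℚ) / ((p * Q : ℕ) : ℚ)⌉ := by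
  have hx : ((L * p : ℕ) : ℚ) / ((p * Q : ℕ) : ℚ) = (L : ℚ) / (Q : ℚ) := by
    have hp0 : (p : ℚ) ≠ 0 := by positivity
    have hQ0 : (Q : ℚ) ≠ 0 := by positivity
    push_cast
    field_simp
  rw [hx, Nat.cast_add, Nat.cast_one, Int.add_one_le_iff, Int.lt_ceil]
  have h1 : (((L - 1) / Q : ℕ) : ℚ) ≤ ((L - 1 : ℕ) : ℚ) / (Q : ℚ) := Nat.cast_div_le
  have h2 : ((L - 1 : ℕ) : ℚ) < (L : ℚ) := by
    have : L - 1 < L := by omega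
    exact_mod_cast this
  have hQ0 : (0 : ℚ) < (Q : ℚ) := by positivity
  push_cast
  calc (((L - 1) / Q : ℕ) : ℚ) ≤ ((L - 1 : ℕ) : ℚ) / (Q : ℚ) := h1
    _ < (L : ℚ) / (Q : ℚ) := by apply div_lt_div_of_pos_right h2 hQ0

lemma ineq_low (P X Y : ℚ) (h : P * Y = X) (hX : 4 ≤ X) (hP : 2 ≤ P) (hY : 1 ≤ Y)
    (hXP : P * P ≤ X) (hPc : P = 2 ∨ 3 ≤ P) :
    (P - 1) * ((X * (X - 1) - 1) * Y) < X * (X - 1) * (X - 2) := by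
  have hP0 : (0 : ℚ) < P := by linarith
  have key : (P - 1) * (X * (X - 1) - 1) * X < P * (X * (X - 1) * (X - 2)) := by
    rcases hPc with rfl | h3
    · nlinarith [mul_nonneg (by linarith : (0:ℚ) ≤ X - 4) (by linarith : (0:ℚ) ≤ X - 1), hX]
    · have h1 : P * P * X ≤ X * X := mul_le_mul_of_nonneg_right hXP (by linarith)
      have h2 : P * P * X * X ≤ X * X * X :=
        mul_le_mul_of_nonneg_right h1 (by linarith)
      have h4 : (0:ℚ) ≤ (P - 3) * (P + 1) :=
        mul_nonneg (by linarith) (by linarith)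
      nlinarith [h2, mul_nonneg h4 (mul_nonneg (by linarith : (0:ℚ) ≤ X) (by linarith : (0:ℚ) ≤ X)), hX, hP0]
  have e : P * ((P - 1) * ((X * (X - 1) - 1) * Y)) = (P - 1) * (X * (X - 1) - 1) * X := by
    rw [← h]; ring
  nlinarith [key, e, hP0]

lemma ineq_high (P X Y : ℚ) (h : P * Y = X) (hX : 4 ≤ X) :
    2 * (X - 1) * (X * (X - 1)) - ((X - 1 + 1) * (X - 1) * X) ≤ P * ((X * (X - 1) - 1) * Y) := by
  have e : P * ((X * (X - 1) - 1) * Y) = (X * (X - 1) - 1) * X := by rw [← h]; ring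
  nlinarith [e, hX]

lemma pengFan_aux (p m : ℕ) (hp : p.Prime) (hm : 1 < m) :
    (⌈(((2 * (p * (p ^ m - 1) * p ^ (m - 1) / p ^ m) * (p * (p ^ m - 1)) * p ^ (m - 1) : ℕ) : ℚ)
        - (((p * (p ^ m - 1) * p ^ (m - 1) / p ^ m + 1) * (p * (p ^ m - 1) * p ^ (m - 1) / p ^ m) * p ^ m : ℕ) : ℚ))
      / ((((p * (p ^ m - 1) * p ^ (m - 1) : ℕ) : ℚ) - 1) * ((p ^ (m - 1) : ℕ) : ℚ))⌉ : ℤ) = p := by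
  have hp2 : 2 ≤ p := hp.two_le
  have hq4 : 4 ≤ p ^ m := by
    calc (4 : ℕ) = 2 ^ 2 := rfl
      _ ≤ p ^ 2 := Nat.pow_le_pow_left hp2 2
      _ ≤ p ^ m := Nat.pow_le_pow_right (by omega) hm
  have hqm : p * p ^ (m - 1) = p ^ m := by
    rw [← pow_succ']
    congr 1
    omega
  have hnM : p * (p ^ m - 1) * p ^ (m - 1) = p ^ m * (p ^ m - 1) := by
    rw [mul_right_comm, hqm]
  have hI : p * (p ^ m - 1) * p ^ (m - 1) / p ^ m = p ^ m - 1 := by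
    rw [hnM, Nat.mul_div_cancel_left _ (by omega)]
  have hA : 2 * (p ^ m - 1) * (p * (p ^ m - 1)) * p ^ (m - 1)
      = 2 * (p ^ m - 1) * (p ^ m * (p ^ m - 1)) := by
    rw [mul_assoc (2 * (p ^ m - 1)), hnM]
  rw [hI, hnM, hA]
  have h1q : (1 : ℕ) ≤ p ^ m := by omega
  have hX4 : (4 : ℚ) ≤ (p : ℚ) ^ m := by exact_mod_cast hq4
  have hPY : (p : ℚ) * (p : ℚ) ^ (m - 1) = (p : ℚ) ^ m := by exact_mod_cast hqm
  have hP2 : (2 : ℚ) ≤ (p : ℚ) := by exact_mod_cast hp2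
  have hY1 : (1 : ℚ) ≤ (p : ℚ) ^ (m - 1) := by
    have : 1 ≤ p ^ (m - 1) := Nat.one_le_pow _ _ (by omega)
    exact_mod_cast this
  have hXP : (p : ℚ) * (p : ℚ) ≤ (p : ℚ) ^ m := by
    have : p * p ≤ p ^ m := by
      calc p * p = p ^ 2 := by ring
        _ ≤ p ^ m := Nat.pow_le_pow_right (by omega) hm
    exact_mod_cast this
  have hPc : (p : ℚ) = 2 ∨ (3 : ℚ) ≤ (p : ℚ) := by
    rcases eq_or_ne p 2 with h | h
    · left; rw [h]; norm_num
    · right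
      have : 3 ≤ p := by omega
      exact_mod_cast this
  have hden : (0 : ℚ) < (((p ^ m * (p ^ m - 1) : ℕ) : ℚ) - 1) * ((p ^ (m - 1) : ℕ) : ℚ) := by
    have h12 : ((12 : ℕ) : ℚ) ≤ ((p ^ m * (p ^ m - 1) : ℕ) : ℚ) := by
      exact_mod_cast (show (12 : ℕ) ≤ p ^ m * (p ^ m - 1) from
        Nat.mul_le_mul hq4 (show 3 ≤ p ^ m - 1 by omega))
    have h1' : ((1 : ℕ) : ℚ) ≤ ((p ^ (m - 1) : ℕ) : ℚ) := by
      exact_mod_cast Nat.one_le_pow _ _ (by omega : 0 < p)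
    push_cast at h12 h1' ⊢
    nlinarith [h12, h1']
  rw [Int.ceil_eq_iff]
  constructor
  · rw [lt_div_iff₀ hden]
    push_cast [Nat.cast_sub h1q]
    have := ineq_low (p : ℚ) ((p : ℚ) ^ m) ((p : ℚ) ^ (m - 1)) hPY hX4 hP2 hY1 hXP hPc
    linarith [this]
  · rw [div_le_iff₀ hden]
    push_cast [Nat.cast_sub h1q]
    have := ineq_high (p : ℚ) ((p : ℚ) ^ m) ((p : ℚ) ^ (m - 1)) hPY hX4
    linarith [this]

theorem stmt5 (p m : ℕ) (hp : p.Prime) (hm : 1 < m) :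
    IsStrictlyOptimalFHSSet (p * (p ^ m - 1)) (p ^ (m - 1)) p (p ^ m) := by
  classical
  haveI : Fact p.Prime := ⟨hp⟩
  have hp2 : 2 ≤ p := hp.two_le
  have hq4 : 4 ≤ p ^ m := by
    calc (4 : ℕ) = 2 ^ 2 := rfl
      _ ≤ p ^ 2 := Nat.pow_le_pow_left hp2 2
      _ ≤ p ^ m := Nat.pow_le_pow_right (by omega) hm
  haveI hQnz : NeZero (p ^ m - 1) := ⟨by omega⟩
  haveI hnnz : NeZero (p * (p ^ m - 1)) := ⟨by
    have : p * (p ^ m - 1) ≥ 2 * 3 := Nat.mul_le_mul hp2 (by omega)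
    omega⟩
  -- the finite field
  set F := GaloisField p m with hF
  haveI : Fintype F := Fintype.ofFinite F
  have hcard : Fintype.card F = p ^ m := by
    have := GaloisField.card p m (by omega : m ≠ 0)
    rwa [Nat.card_eq_fintype_card] at this
  have hcardu : Fintype.card Fˣ = p ^ m - 1 := by
    rw [Fintype.card_units, hcard]
  obtain ⟨g, hg⟩ := IsCyclic.exists_generator (α := Fˣ)
  have horder : orderOf g = p ^ m - 1 := by
    rw [orderOf_eq_card_of_forall_mem_zpowers hg, Nat.card_eq_fintype_card, hcardu]
  set φ : ZMod (p ^ m - 1) → Fˣ := fun x => g ^ x.val with hφ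
  have hφadd : ∀ x y, φ (x + y) = φ x * φ y := by
    intro x y
    simp only [hφ]
    have hmo := pow_mod_orderOf g (x.val + y.val)
    rw [horder] at hmo
    rw [ZMod.val_add, hmo, pow_add]
  have hφinj : Function.Injective φ := by
    intro x y hxy
    simp only [hφ] at hxy
    rw [pow_eq_pow_iff_modEq, horder] at hxy
    have hx := ZMod.val_lt x
    have hy := ZMod.val_lt y
    have : x.val = y.val := by
      rw [Nat.ModEq] at hxy
      rwa [Nat.mod_eq_of_lt hx, Nat.mod_eq_of_lt hy] at hxy
    exact ZMod.val_injective _ this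
  have hφsurj : Function.Surjective φ := by
    have hbij : Function.Bijective φ := by
      rw [Fintype.bijective_iff_injective_and_card]
      exact ⟨hφinj, by rw [ZMod.card, hcardu]⟩
    exact hbij.surjective
  have hφ0 : φ 0 = 1 := by
    simp only [hφ, ZMod.val_zero, pow_zero]
  -- the prime subfield and a complement
  set ι : ZMod p →+* F := algebraMap (ZMod p) F with hι
  have hιinj : Function.Injective ι := ι.injective
  set K : Submodule (ZMod p) F := Submodule.span (ZMod p) {(1 : F)} with hK
  have hιmem : ∀ c : ZMod p, ι c ∈ K := by
    intro c
    rw [hK]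
    have : ι c = c • (1 : F) := by
      rw [Algebra.algebraMap_eq_smul_one]
    rw [this]
    exact Submodule.smul_mem _ _ (Submodule.mem_span_singleton_self 1)
  obtain ⟨W, hW⟩ := Submodule.exists_isCompl K
  have hrank : Module.finrank (ZMod p) F = m := GaloisField.finrank p (by omega : m ≠ 0)
  have hrkK : Module.finrank (ZMod p) K = 1 := finrank_span_singleton one_ne_zero
  have hrkW : Module.finrank (ZMod p) W = m - 1 := by
    have h1 := Submodule.finrank_add_eq_of_isCompl hW
    omega
  haveI : Fintype W := Fintype.ofFinite W
  have hcW : Fintype.card W = p ^ (m - 1) := by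
    rw [Module.card_eq_pow_finrank (K := ZMod p) (V := W), ZMod.card, hrkW]
  set e : Fin (p ^ (m - 1)) ≃ W := (Fintype.equivFinOfCardEq hcW).symm with he
  set A : Fin (p ^ (m - 1)) → F := fun i => ((e i : W) : F) with hA
  have hAdiff : ∀ a b : Fin (p ^ (m - 1)), a ≠ b → ∀ c : ZMod p, ι c ≠ A a - A b := by
    intro a b hab c hc
    have hmemW : A a - A b ∈ W := sub_mem (e a).2 (e b).2
    have hmemK : A a - A b ∈ K := hc ▸ hιmem c
    have h0 : A a - A b = 0 := (Submodule.disjoint_def.mp hW.disjoint) _ hmemK hmemW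
    have : A a = A b := by linear_combination h0
    exact hab (e.injective (Subtype.coe_injective this))
  set e' : F ≃ Fin (p ^ m) := Fintype.equivFinOfCardEq hcard with he'
  -- the projections
  set π1 : ZMod (p * (p ^ m - 1)) →+* ZMod p :=
    ZMod.castHom (Dvd.intro _ rfl) (ZMod p) with hπ1
  set π2 : ZMod (p * (p ^ m - 1)) →+* ZMod (p ^ m - 1) :=
    ZMod.castHom (dvd_mul_left _ _) (ZMod (p ^ m - 1)) with hπ2
  -- CRT injectivity
  have hcrt : ∀ τ : ZMod (p * (p ^ m - 1)), π1 τ = 0 → π2 τ = 0 → τ = 0 := by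
    intro τ h1 h2
    have hval : ((τ.val : ℕ) : ZMod (p * (p ^ m - 1))) = τ := ZMod.natCast_rightInverse τ
    have h1' : ((τ.val : ℕ) : ZMod p) = 0 := by
      rw [← map_natCast π1 τ.val, hval]; exact h1
    have h2' : ((τ.val : ℕ) : ZMod (p ^ m - 1)) = 0 := by
      rw [← map_natCast π2 τ.val, hval]; exact h2
    have hv1 : p ∣ τ.val := (ZMod.natCast_eq_zero_iff _ _).mp h1'
    have hv2 : (p ^ m - 1) ∣ τ.val := (ZMod.natCast_eq_zero_iff _ _).mp h2'
    have hco : Nat.Coprime p (p ^ m - 1) := by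
      rw [hp.coprime_iff_not_dvd]
      intro hdvd
      have hpm : p ∣ p ^ m := dvd_pow_self p (by omega : m ≠ 0)
      have h1 : p ∣ p ^ m - (p ^ m - 1) := Nat.dvd_sub hpm hdvd
      have h2 : p ^ m - (p ^ m - 1) = 1 := by omega
      rw [h2] at h1
      have := Nat.dvd_one.mp h1
      omega
    have hvn : p * (p ^ m - 1) ∣ τ.val := hco.mul_dvd_of_dvd_of_dvd hv1 hv2
    have hlt : τ.val < p * (p ^ m - 1) := ZMod.val_lt τ
    have hv0 : τ.val = 0 := Nat.eq_zero_of_dvd_of_lt hvn hlt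
    rw [← hval, hv0, Nat.cast_zero]
  -- the FHS set
  set X : Fin (p ^ (m - 1)) → ZMod (p * (p ^ m - 1)) → Fin (p ^ m) :=
    fun a t => e' ((φ (π2 t) : F) + ι (π1 t) + A a) with hX
  -- the coincidence condition
  have hcond : ∀ (a b : Fin (p ^ (m - 1))) (τ s : ZMod (p * (p ^ m - 1))),
      (X a s = X b (s + τ)) ↔
      (φ (π2 s) : F) * (1 - (φ (π2 τ) : F)) = ι (π1 τ) + A b - A a := by
    intro a b τ s
    simp only [hX, Equiv.apply_eq_iff_eq]
    rw [map_add π2 s τ, map_add π1 s τ, hφadd, map_add ι, Units.val_mul]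
    constructor <;> intro h <;> linear_combination h
  -- the key correlation bound
  have key : ∀ (a b : Fin (p ^ (m - 1))) (τ j : ZMod (p * (p ^ m - 1))),
      (a = b → τ ≠ 0) → ∀ L : ℕ, 1 ≤ L →
      (partialHC (X a) (X b) τ j L : ℤ) ≤
        ⌈((L * p : ℕ) : ℚ) / ((p * (p ^ m - 1) : ℕ) : ℚ)⌉ := by
    intro a b τ j hab L hL
    obtain ⟨r, hr⟩ : ∃ r : ℕ, ∀ t : ℕ,
        (X a (j + (t : ZMod (p * (p ^ m - 1)))) =
          X b (j + (t : ZMod (p * (p ^ m - 1))) + τ)) → t % (p ^ m - 1) = r := by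
      by_cases hu : (1 : F) - (φ (π2 τ) : F) = 0
      · -- τ ≡ 0 mod (p^m - 1); coincidences are impossible
        have hτ2 : π2 τ = 0 := by
          apply hφinj
          rw [hφ0]
          apply Units.ext
          rw [Units.val_one]
          linear_combination -hu
        have hδ : ι (π1 τ) + A b - A a ≠ 0 := by
          rcases eq_or_ne a b with rfl | hne
          · have hτ0 : τ ≠ 0 := hab rfl
            intro h0
            have : ι (π1 τ) = ι 0 := by rw [map_zero]; linear_combination h0
            exact hτ0 (hcrt τ (hιinj this) hτ2)
          · intro h0
            exact hAdiff a b hne (π1 τ) (by linear_combination h0)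
        refine ⟨0, fun t hc => ?_⟩
        rw [hcond] at hc
        rw [hu, mul_zero] at hc
        exact absurd hc.symm hδ
      · by_cases hδ : ι (π1 τ) + A b - A a = 0
        · -- no coincidences
          refine ⟨0, fun t hc => ?_⟩
          rw [hcond, hδ] at hc
          exact absurd hc (mul_ne_zero (Units.ne_zero _) hu)
        · -- coincidences lie in a single residue class mod p^m - 1
          obtain ⟨c, hc⟩ := hφsurj (Units.mk0 ((ι (π1 τ) + A b - A a) * ((1 : F) - (φ (π2 τ) : F))⁻¹) (by
            apply mul_ne_zero hδ (inv_ne_zero hu)))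
          refine ⟨(c - π2 j).val, fun t hct => ?_⟩
          rw [hcond] at hct
          have h1 : (φ (π2 (j + (t : ZMod (p * (p ^ m - 1))))) : F) = (φ c : F) := by
            rw [hc, Units.val_mk0]
            rw [eq_mul_inv_iff_mul_eq₀ hu]
            exact hct
          have h2 : π2 (j + (t : ZMod (p * (p ^ m - 1)))) = c := hφinj (Units.ext h1)
          rw [map_add, map_natCast π2 t] at h2
          have h3 : ((t : ℕ) : ZMod (p ^ m - 1)) = c - π2 j := by
            rw [← h2]; ring
          rw [← ZMod.val_natCast, h3]
    have h1 : partialHC (X a) (X b) τ j L ≤ (L - 1) / (p ^ m - 1) + 1 := by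
      rw [partialHC]
      exact count_aux L (p ^ m - 1) r _ (fun t _ hc => hr t hc)
    calc (partialHC (X a) (X b) τ j L : ℤ)
        ≤ (((L - 1) / (p ^ m - 1) + 1 : ℕ) : ℤ) := by exact_mod_cast h1
      _ ≤ _ := ceil_aux L (p ^ m - 1) p (by omega) (by omega) hL
  constructor
  · show ((p : ℕ) : ℤ) = pengFanBound _ _ _
    rw [pengFanBound]
    exact (pengFan_aux p m hp hm).symm
  refine ⟨X, ?_, ?_⟩
  · intro a b hab hXab
    have h0 := congrFun hXab 0
    simp only [hX, Equiv.apply_eq_iff_eq] at h0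
    have : A a = A b := by linear_combination h0
    exact hab (e.injective (Subtype.coe_injective this))
  · intro L hL1 hLn
    constructor
    · intro a τ hτ j
      exact key a a τ j (fun _ => hτ) L hL1
    · intro a b hab τ j
      exact key a b τ j (fun h => absurd h hab) L hL1
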